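/- Let G be any finite simple graph on vertices {x_1, ..., x_n}, let k_1, ..., k_n be integers with each k_i ≥ 2, and let G̃ be the graph obtained from G by appending a clique of size k_i at each vertex x_i. Then Shed(G̃) is a dominating set of G̃; in fact the set {x_{1,1}, ..., x_{n,1}} of original vertices is contained in Shed(G̃) and is a dominating set of G̃. -/
import Mathlib


open scoped Classical

variable {V : Type*}

/-- `S` is an independent set of the induced subgraph of `G` on the vertex set `A`. -/
def IsIndepIn (G : SimpleGraph V) (A S : Finset V) : Prop :=
  S ⊆ A ∧ ∀ u ∈ S, ∀ v ∈ S, ¬ G.Adj u v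

/-- `S` is a maximal independent set of the induced subgraph of `G` on the vertex set `A`. -/
def IsMaxIndepIn (G : SimpleGraph V) (A S : Finset V) : Prop :=
  IsIndepIn G A S ∧ ∀ T, IsIndepIn G A T → S ⊆ T → T = S

/-- The induced subgraph of `G` on the vertex set `A` is well-covered: all of its
maximal independent sets have the same cardinality. -/
def WellCoveredOn (G : SimpleGraph V) (A : Finset V) : Prop :=
  ∀ S T, IsMaxIndepIn G A S → IsMaxIndepIn G A T → S.card = T.card

/-- The closed neighbourhood of `x` deleted from `A`: the vertices of `A` distinct from `x`
and not adjacent to `x`. -/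
noncomputable def delClosedNbhd (G : SimpleGraph V) (A : Finset V) (x : V) : Finset V :=
  A.filter fun y => y ≠ x ∧ ¬ G.Adj x y

/-- The induced subgraph of `G` on the vertex set `A` is vertex decomposable: it is
well-covered, and either it has no edges, or some vertex `x ∈ A` is such that deleting `x`,
respectively the closed neighbourhood of `x`, leaves a vertex decomposable graph. -/
def VertexDecomposableOn (G : SimpleGraph V) (A : Finset V) : Prop :=
  WellCoveredOn G A ∧
    ((∀ u ∈ A, ∀ v ∈ A, ¬ G.Adj u v) ∨
      ∃ x, ∃ _h : x ∈ A,
        VertexDecomposableOn G (A.erase x) ∧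
        VertexDecomposableOn G (delClosedNbhd G A x))
termination_by A.card
decreasing_by
  · exact Finset.card_erase_lt_of_mem (by assumption)
  · exact Finset.card_lt_card
      (Finset.filter_ssubset.mpr ⟨x, by assumption, by simp⟩)

/-- A finite simple graph is well-covered if all of its maximal independent sets have the
same cardinality. -/
def WellCovered (G : SimpleGraph V) [Fintype V] : Prop :=
  WellCoveredOn G Finset.univ

/-- A finite simple graph is vertex decomposable. -/
def VertexDecomposable (G : SimpleGraph V) [Fintype V] : Prop :=
  VertexDecomposableOn G Finset.univ

/-- The set of shedding vertices of `G` : those vertices `x` such that both `G \ x` and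
`G \ N[x]` are vertex decomposable. -/
def Shed (G : SimpleGraph V) [Fintype V] : Set V :=
  {x | VertexDecomposableOn G (Finset.univ.erase x) ∧
       VertexDecomposableOn G (delClosedNbhd G Finset.univ x)}

/-- `D` is a dominating set of `G`: every vertex not in `D` is adjacent to a vertex of `D`. -/
def IsDominatingSet (G : SimpleGraph V) (D : Set V) : Prop :=
  ∀ v, v ∉ D → ∃ u ∈ D, G.Adj u v

/-- A vertex is simplicial if its neighbourhood induces a clique. -/
def IsSimplicialVertex (G : SimpleGraph V) (x : V) : Prop :=
  ∀ u v, G.Adj x u → G.Adj x v → u ≠ v → G.Adj u v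

/-- The graph `G̃` obtained from `G` by appending a clique of size `k i` at each vertex `i`:
the vertex `x_{i,j}` is the pair `⟨i, j⟩` (0-indexed, so `x_{i,1}` of the paper is `⟨i, 0⟩`);
each fibre `{⟨i, j⟩ : j < k i}` induces a clique, and `⟨i, 0⟩` is adjacent to `⟨j, 0⟩`
exactly when `i` and `j` are adjacent in `G`. -/
def appendCliques {n : ℕ} (G : SimpleGraph (Fin n)) (k : Fin n → ℕ) :
    SimpleGraph (Σ i : Fin n, Fin (k i)) :=
  SimpleGraph.fromRel fun p q =>
    p.1 = q.1 ∨ (p.2.val = 0 ∧ q.2.val = 0 ∧ G.Adj p.1 q.1)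


section Aux

variable {n : ℕ} {G : SimpleGraph (Fin n)} {k : Fin n → ℕ}

lemma mem_delClosedNbhd' {V : Type*} {G : SimpleGraph V} {A : Finset V} {x y : V} :
    y ∈ delClosedNbhd G A x ↔ y ∈ A ∧ y ≠ x ∧ ¬ G.Adj x y := by
  rw [delClosedNbhd]
  simp [Finset.mem_filter]

lemma delClosedNbhd_subset' {V : Type*} (G : SimpleGraph V) (A : Finset V) (x : V) :
    delClosedNbhd G A x ⊆ A := fun y hy => (mem_delClosedNbhd'.mp hy).1

lemma delClosedNbhd_card_lt' {V : Type*} (G : SimpleGraph V) (A : Finset V) {x : V}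
    (hx : x ∈ A) : (delClosedNbhd G A x).card < A.card := by
  apply Finset.card_lt_card
  rw [Finset.ssubset_iff_of_subset (delClosedNbhd_subset' G A x)]
  exact ⟨x, hx, fun h => by simp [mem_delClosedNbhd'] at h⟩

lemma sigma_ext {p q : Σ i : Fin n, Fin (k i)} (h1 : p.1 = q.1) (h2 : p.2.val = q.2.val) :
    p = q := by
  obtain ⟨i, x⟩ := p; obtain ⟨j, y⟩ := q
  cases h1
  simpa using Fin.ext h2

lemma ac_adj_iff {p q : Σ i : Fin n, Fin (k i)} :
    (appendCliques G k).Adj p q ↔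
      p ≠ q ∧ (p.1 = q.1 ∨ (p.2.val = 0 ∧ q.2.val = 0 ∧ G.Adj p.1 q.1)) := by
  simp only [appendCliques, SimpleGraph.fromRel_adj]
  constructor
  · rintro ⟨hne, h | h⟩
    · exact ⟨hne, h⟩
    · refine ⟨hne, ?_⟩
      rcases h with h | ⟨a, b, c⟩
      · exact Or.inl h.symm
      · exact Or.inr ⟨b, a, c.symm⟩
  · rintro ⟨hne, h⟩; exact ⟨hne, Or.inl h⟩

lemma adj_fiber {p q : Σ i : Fin n, Fin (k i)} (hne : p ≠ q) (h : p.1 = q.1) :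
    (appendCliques G k).Adj p q := ac_adj_iff.mpr ⟨hne, Or.inl h⟩

/-- The key invariant: every fibre whose base vertex has a cross neighbour has ≥ 2 vertices. -/
def Pinv (G : SimpleGraph (Fin n)) (k : Fin n → ℕ) (A : Finset (Σ i : Fin n, Fin (k i))) :
    Prop :=
  ∀ p ∈ A, p.2.val = 0 → (∃ q ∈ A, q.2.val = 0 ∧ G.Adj p.1 q.1) →
    1 < (A.filter fun r => r.1 = p.1).card

lemma maxIndep_card {A S : Finset (Σ i : Fin n, Fin (k i))} (hP : Pinv G k A)
    (hS : IsMaxIndepIn (appendCliques G k) A S) :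
    S.card = (A.image Sigma.fst).card := by
  obtain ⟨⟨hSA, hind⟩, hmax⟩ := hS
  have hinj : Set.InjOn Sigma.fst (S : Set ((i : Fin n) × Fin (k i))) := by
    intro p hp q hq h
    by_contra hne
    exact hind p hp q hq (adj_fiber hne h)
  rw [← Finset.card_image_of_injOn hinj]
  congr 1
  apply Finset.Subset.antisymm (Finset.image_subset_image hSA)
  intro i hi
  simp only [Finset.mem_image] at hi ⊢
  obtain ⟨p, hpA, hpi⟩ := hi
  by_contra hnot
  push_neg at hnot
  -- find a vertex v in fibre i of A not adjacent to anything in S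
  have key : ∃ v ∈ A, v.1 = i ∧ ∀ u ∈ S, ¬ (appendCliques G k).Adj v u := by
    by_cases hex : ∃ r ∈ A, r.1 = i ∧ r.2.val ≠ 0
    · obtain ⟨r, hrA, hri, hr0⟩ := hex
      refine ⟨r, hrA, hri, fun u hu hadj => ?_⟩
      rcases (ac_adj_iff.mp hadj).2 with h | ⟨h0, _, _⟩
      · exact hnot u hu (h ▸ hri)
      · exact hr0 h0
    · push_neg at hex
      have hp0 : p.2.val = 0 := by
        by_contra h0
        exact h0 (hex p hpA hpi)
      have hnocross : ¬ ∃ q ∈ A, q.2.val = 0 ∧ G.Adj p.1 q.1 := by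
        intro hcross
        have := hP p hpA hp0 hcross
        obtain ⟨a, ha, b, hb, hab⟩ := Finset.one_lt_card.mp this
        simp only [Finset.mem_filter] at ha hb
        apply hab
        apply sigma_ext (ha.2.trans hb.2.symm)
        rw [hex a ha.1 (ha.2.trans hpi), hex b hb.1 (hb.2.trans hpi)]
      refine ⟨p, hpA, hpi, fun u hu hadj => ?_⟩
      rcases (ac_adj_iff.mp hadj).2 with h | ⟨_, hu0, hGadj⟩
      · exact hnot u hu (h ▸ hpi)
      · exact hnocross ⟨u, hSA hu, hu0, hGadj⟩
  obtain ⟨v, hvA, hvi, hvnadj⟩ := key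
  have hT : IsIndepIn (appendCliques G k) A (insert v S) := by
    refine ⟨Finset.insert_subset hvA hSA, ?_⟩
    intro u hu w hw hadj
    rcases Finset.mem_insert.mp hu with h1 | h1 <;>
      rcases Finset.mem_insert.mp hw with h2 | h2
    · exact (appendCliques G k).irrefl (h1 ▸ h2 ▸ hadj)
    · exact hvnadj w h2 (h1 ▸ hadj)
    · exact hvnadj u h1 (h2 ▸ hadj.symm)
    · exact hind u h1 w h2 hadj
  have := hmax _ hT (Finset.subset_insert v S)
  have hvS : v ∈ S := this ▸ Finset.mem_insert_self v S
  exact hnot v hvS hvi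

lemma wellCovered_of_Pinv {A : Finset (Σ i : Fin n, Fin (k i))} (hP : Pinv G k A) :
    WellCoveredOn (appendCliques G k) A := fun S T hS hT =>
  (maxIndep_card hP hS).trans (maxIndep_card hP hT).symm

lemma Pinv_of_noCross {A B : Finset (Σ i : Fin n, Fin (k i))}
    (h : ¬ ∃ p ∈ A, p.2.val = 0 ∧ ∃ q ∈ A, q.2.val = 0 ∧ G.Adj p.1 q.1)
    (hBA : B ⊆ A) : Pinv G k B := by
  intro p hp hp0 ⟨q, hq, hq0, hadj⟩
  exact absurd ⟨p, hBA hp, hp0, q, hBA hq, hq0, hadj⟩ h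

lemma Pinv_erase {A : Finset (Σ i : Fin n, Fin (k i))} (hP : Pinv G k A)
    {x : Σ i : Fin n, Fin (k i)} (hx0 : x.2.val = 0) : Pinv G k (A.erase x) := by
  intro p hp hp0 ⟨q, hq, hq0, hadj⟩
  have hpA := Finset.mem_of_mem_erase hp
  have hpx : p ≠ x := Finset.ne_of_mem_erase hp
  have hfib : p.1 ≠ x.1 := fun h => hpx (sigma_ext h (hp0.trans hx0.symm))
  obtain ⟨a, ha, b, hb, hab⟩ := Finset.one_lt_card.mp
    (hP p hpA hp0 ⟨q, Finset.mem_of_mem_erase hq, hq0, hadj⟩)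
  simp only [Finset.mem_filter] at ha hb
  refine Finset.one_lt_card.mpr ⟨a, ?_, b, ?_, hab⟩ <;> rw [Finset.mem_filter] <;>
    constructor
  · exact Finset.mem_erase.mpr ⟨fun h => hfib (h ▸ ha.2).symm, ha.1⟩
  · exact ha.2
  · exact Finset.mem_erase.mpr ⟨fun h => hfib (h ▸ hb.2).symm, hb.1⟩
  · exact hb.2

lemma Pinv_delClosed {A : Finset (Σ i : Fin n, Fin (k i))} (hP : Pinv G k A)
    {x : Σ i : Fin n, Fin (k i)} (hx0 : x.2.val = 0) :
    Pinv G k (delClosedNbhd (appendCliques G k) A x) := by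
  intro p hp hp0 ⟨q, hq, hq0, hadj⟩
  rw [mem_delClosedNbhd'] at hp hq
  obtain ⟨hpA, hpx, hpnadj⟩ := hp
  have hfib : p.1 ≠ x.1 := fun h =>
    hpnadj (adj_fiber (fun e => hpx e.symm) h.symm)
  have hnG : ¬ G.Adj x.1 p.1 := fun hG =>
    hpnadj (ac_adj_iff.mpr ⟨fun e => hpx e.symm, Or.inr ⟨hx0, hp0, hG⟩⟩)
  obtain ⟨a, ha, b, hb, hab⟩ := Finset.one_lt_card.mp
    (hP p hpA hp0 ⟨q, hq.1, hq0, hadj⟩)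
  simp only [Finset.mem_filter] at ha hb
  have hsurv : ∀ r : Σ i : Fin n, Fin (k i), r ∈ A → r.1 = p.1 →
      r ∈ delClosedNbhd (appendCliques G k) A x := by
    intro r hrA hr1
    rw [mem_delClosedNbhd']
    refine ⟨hrA, fun h => hfib ((h ▸ hr1).symm ▸ rfl), fun hadj' => ?_⟩
    rcases (ac_adj_iff.mp hadj').2 with h | ⟨_, _, hG⟩
    · exact hfib (h ▸ hr1).symm
    · exact hnG (hr1 ▸ hG)
  refine Finset.one_lt_card.mpr ⟨a, ?_, b, ?_, hab⟩ <;> rw [Finset.mem_filter]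
  · exact ⟨hsurv a ha.1 ha.2, ha.2⟩
  · exact ⟨hsurv b hb.1 hb.2, hb.2⟩

lemma vd_of_Pinv : ∀ (N : ℕ) (A : Finset (Σ i : Fin n, Fin (k i))), A.card ≤ N →
    Pinv G k A → VertexDecomposableOn (appendCliques G k) A := by
  intro N
  induction N with
  | zero =>
    intro A hcard hP
    rw [VertexDecomposableOn]
    have : A = ∅ := Finset.card_eq_zero.mp (Nat.le_zero.mp hcard)
    subst this
    exact ⟨wellCovered_of_Pinv hP, Or.inl (by simp)⟩
  | succ N ih =>
    intro A hcard hP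
    rw [VertexDecomposableOn]
    refine ⟨wellCovered_of_Pinv hP, ?_⟩
    by_cases hedge : ∀ u ∈ A, ∀ v ∈ A, ¬ (appendCliques G k).Adj u v
    · exact Or.inl hedge
    · right
      push_neg at hedge
      obtain ⟨u, huA, v, hvA, hadj⟩ := hedge
      have hcard1 : ∀ x ∈ A, (A.erase x).card ≤ N := by
        intro x hx
        have h1 : (A.erase x).card < A.card := Finset.card_erase_lt_of_mem hx
        omega
      have hcard2 : ∀ x ∈ A, (delClosedNbhd (appendCliques G k) A x).card ≤ N := by
        intro x hx
        have := delClosedNbhd_card_lt' (appendCliques G k) A hx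
        omega
      by_cases hcross : ∃ p ∈ A, p.2.val = 0 ∧ ∃ q ∈ A, q.2.val = 0 ∧ G.Adj p.1 q.1
      · obtain ⟨x, hxA, hx0, _⟩ := hcross
        refine ⟨x, hxA, ?_, ih _ (hcard2 x hxA) (Pinv_delClosed hP hx0)⟩
        convert ih (A.erase x) (hcard1 x hxA) (Pinv_erase hP hx0) using 2
      · refine ⟨u, huA, ?_, ih _ (hcard2 u huA)
          (Pinv_of_noCross hcross (delClosedNbhd_subset' _ _ _))⟩
        have hsub : A.erase u ⊆ A := Finset.erase_subset u A
        convert ih (A.erase u) (hcard1 u huA) (Pinv_of_noCross hcross hsub) using 2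

lemma Pinv_of_fibers {A : Finset (Σ i : Fin n, Fin (k i))}
    (h : ∀ p ∈ A, p.2.val = 0 → (∃ q ∈ A, q.2.val = 0 ∧ G.Adj p.1 q.1) →
      ∃ a ∈ A, ∃ b ∈ A, a.1 = p.1 ∧ b.1 = p.1 ∧ a ≠ b) : Pinv G k A := by
  intro p hp hp0 hex
  obtain ⟨a, ha, b, hb, ha1, hb1, hab⟩ := h p hp hp0 hex
  exact Finset.one_lt_card.mpr ⟨a, Finset.mem_filter.mpr ⟨ha, ha1⟩, b,
    Finset.mem_filter.mpr ⟨hb, hb1⟩, hab⟩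

lemma witness_pair (hk : ∀ i, 2 ≤ k i) (i : Fin n) :
    ∃ a b : Σ j : Fin n, Fin (k j), a.1 = i ∧ b.1 = i ∧ a.2.val = 0 ∧ b.2.val = 1 ∧
      a ≠ b := by
  refine ⟨⟨i, ⟨0, by have := hk i; omega⟩⟩, ⟨i, ⟨1, by have := hk i; omega⟩⟩,
    rfl, rfl, rfl, rfl, ?_⟩
  intro h
  have := congrArg (fun s : Σ j : Fin n, Fin (k j) => s.2.1) h
  simp at this


end Aux

/-- For any graph `G` and clique sizes `k i ≥ 2`, the set of original
vertices `{x_{i,1}}` is contained in `Shed(G̃)` and is a dominating set of `G̃`; in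
particular `Shed(G̃)` is a dominating set of `G̃`. -/
theorem statement6 (n : ℕ) (G : SimpleGraph (Fin n)) (k : Fin n → ℕ)
    (hk : ∀ i, 2 ≤ k i) :
    (∀ p : Σ i : Fin n, Fin (k i), p.2.val = 0 → p ∈ Shed (appendCliques G k)) ∧
    IsDominatingSet (appendCliques G k) {p : Σ i : Fin n, Fin (k i) | p.2.val = 0} ∧
    IsDominatingSet (appendCliques G k) (Shed (appendCliques G k)) := by
  have hshed : ∀ p : Σ i : Fin n, Fin (k i), p.2.val = 0 →
      p ∈ Shed (appendCliques G k) := by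
    intro p hp0
    refine ⟨?_, ?_⟩
    · have h1 : VertexDecomposableOn (appendCliques G k) (Finset.univ.erase p) := by
        refine vd_of_Pinv _ _ le_rfl (Pinv_of_fibers ?_)
        intro r hr hr0 _
        have hrp : r ≠ p := (Finset.mem_erase.mp hr).1
        have hr1 : r.1 ≠ p.1 := fun h => hrp (sigma_ext h (hr0.trans hp0.symm))
        obtain ⟨a, b, ha1, hb1, ha0, hb2, hab⟩ := witness_pair hk r.1
        have hap : a ≠ p := fun h => hr1 (ha1 ▸ congrArg Sigma.fst h)
        have hbp : b ≠ p := fun h => hr1 (hb1 ▸ congrArg Sigma.fst h)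
        exact ⟨a, Finset.mem_erase.mpr ⟨hap, Finset.mem_univ a⟩,
          b, Finset.mem_erase.mpr ⟨hbp, Finset.mem_univ b⟩, ha1, hb1, hab⟩
      convert h1 using 2
    · refine vd_of_Pinv _ _ le_rfl (Pinv_of_fibers ?_)
      intro r hr hr0 _
      rw [mem_delClosedNbhd'] at hr
      obtain ⟨-, hrp, hrnadj⟩ := hr
      have hr1 : r.1 ≠ p.1 := fun h =>
        hrnadj (adj_fiber (fun e => hrp e.symm) h.symm)
      have hnG : ¬ G.Adj p.1 r.1 := fun hG =>
        hrnadj (ac_adj_iff.mpr ⟨fun e => hrp e.symm, Or.inr ⟨hp0, hr0, hG⟩⟩)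
      obtain ⟨a, b, ha1, hb1, ha0, hb2, hab⟩ := witness_pair hk r.1
      have hap : a ≠ p := fun h => hr1 (ha1 ▸ congrArg Sigma.fst h)
      have hbp : b ≠ p := fun h => hr1 (hb1 ▸ congrArg Sigma.fst h)
      have hanadj : ¬ (appendCliques G k).Adj p a := by
        intro hadj
        rcases (ac_adj_iff.mp hadj).2 with h | ⟨_, _, hG⟩
        · exact hr1 (ha1 ▸ h).symm
        · exact hnG (ha1 ▸ hG)
      have hbnadj : ¬ (appendCliques G k).Adj p b := by
        intro hadj
        rcases (ac_adj_iff.mp hadj).2 with h | ⟨_, h0, _⟩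
        · exact hr1 (hb1 ▸ h).symm
        · rw [hb2] at h0; exact one_ne_zero h0
      exact ⟨a, mem_delClosedNbhd'.mpr ⟨Finset.mem_univ a, hap, hanadj⟩,
        b, mem_delClosedNbhd'.mpr ⟨Finset.mem_univ b, hbp, hbnadj⟩, ha1, hb1, hab⟩
  have hdom : IsDominatingSet (appendCliques G k)
      {p : Σ i : Fin n, Fin (k i) | p.2.val = 0} := by
    intro v hv
    simp only [Set.mem_setOf_eq] at hv
    have h0 : 0 < k v.1 := by have := hk v.1; omega
    refine ⟨⟨v.1, ⟨0, h0⟩⟩, rfl, ?_⟩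
    refine adj_fiber (fun h => ?_) rfl
    have := congrArg (fun s : Σ j : Fin n, Fin (k j) => s.2.1) h
    exact hv this.symm
  refine ⟨hshed, hdom, ?_⟩
  intro v hv
  have hv0 : v.2.val ≠ 0 := fun h => hv (hshed v h)
  obtain ⟨u, hu, hadj⟩ := hdom v hv0
  exact ⟨u, hshed u hu, hadj⟩
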